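/- Let R be a commutative ring, and suppose elements s̃_r (r ≥ 0, s̃_0 = 1), ŝ_r (r ≥ 0, ŝ_0 = 1), and e_1,...,e_n satisfy ŝ_1 = s̃_1 − e_1 and, for each r ≥ 2, the two determinants det(ŝ_{1+j−i})_{1≤i,j≤r} and det(s̃_{1+j−i} − δ_{rj} e_{1+j−i})_{1≤i,j≤r} are equal (the common value being the r-th column class). If additionally s̃_j = ∑_{i=0}^{j} e_i ŝ_{j−i} for all 1 ≤ j ≤ r−1, then s̃_r = ∑_{i=0}^{r} e_i ŝ_{r−i}. -/
import Mathlib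

open Matrix


/-- A sequence extended to integer indices, vanishing for negative indices. -/
def seqZ {R : Type*} [CommRing R] (c : ℕ → R) (m : ℤ) : R :=
  if 0 ≤ m then c m.toNat else 0

section Aux

variable {R : Type*} [CommRing R]

lemma seqZ_coe (c : ℕ → R) (k : ℕ) : seqZ c (k : ℤ) = c k := by
  simp [seqZ]

lemma seqZ_neg (c : ℕ → R) {z : ℤ} (h : z < 0) : seqZ c z = 0 := by
  simp [seqZ, not_le.2 h]

/-- Full convolution of `e` and `sh`, at an integer index. -/
def sigZ (e sh : ℕ → R) (z : ℤ) : R :=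
  ∑ t ∈ Finset.range (z.toNat + 1), e t * seqZ sh (z - t)

lemma sigZ_neg (e sh : ℕ → R) {z : ℤ} (h : z < 0) : sigZ e sh z = 0 := by
  apply Finset.sum_eq_zero
  intro t _
  rw [seqZ_neg _ (by omega), mul_zero]

lemma sigZ_eq_sum (e sh : ℕ → R) (z : ℤ) (N : ℕ) (hN : z < (N : ℤ)) :
    sigZ e sh z = ∑ t ∈ Finset.range N, e t * seqZ sh (z - t) := by
  rcases lt_or_ge z 0 with hz | hz
  · rw [sigZ_neg e sh hz]
    symm
    apply Finset.sum_eq_zero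
    intro t _
    rw [seqZ_neg _ (by omega), mul_zero]
  · apply Finset.sum_subset
    · apply Finset.range_subset_range.2; omega
    · intro t ht hts
      simp only [Finset.mem_range] at ht hts
      rw [seqZ_neg _ (by omega), mul_zero]

lemma conv_lemma {r : ℕ} (e sh : ℕ → R) (hsh0 : sh 0 = 1) (i j : Fin r) :
    ∑ k : Fin r, seqZ sh (1 + (k.val : ℤ) - (i.val : ℤ)) * seqZ e ((j.val : ℤ) - (k.val : ℤ)) =
      sigZ e sh (1 + (j.val : ℤ) - (i.val : ℤ)) -
        (if (i.val : ℕ) = 0 then e (j.val + 1) else 0) := by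
  have h1 : ∑ k : Fin r, seqZ sh (1 + (k.val : ℤ) - (i.val : ℤ)) *
      seqZ e ((j.val : ℤ) - (k.val : ℤ)) =
      ∑ k ∈ Finset.range r, seqZ sh (1 + (k : ℤ) - (i.val : ℤ)) *
        seqZ e ((j.val : ℤ) - (k : ℤ)) :=
    Fin.sum_univ_eq_sum_range
      (fun k : ℕ => seqZ sh (1 + (k : ℤ) - (i.val : ℤ)) * seqZ e ((j.val : ℤ) - (k : ℤ))) r
  have h2 : ∑ k ∈ Finset.range (j.val + 1), seqZ sh (1 + (k : ℤ) - (i.val : ℤ)) *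
        seqZ e ((j.val : ℤ) - (k : ℤ)) =
      ∑ k ∈ Finset.range r, seqZ sh (1 + (k : ℤ) - (i.val : ℤ)) *
        seqZ e ((j.val : ℤ) - (k : ℤ)) := by
    apply Finset.sum_subset
    · apply Finset.range_subset_range.2; omega
    · intro t ht hts
      simp only [Finset.mem_range] at ht hts
      rw [seqZ_neg e (by omega), mul_zero]
  have h3 : ∑ k ∈ Finset.range (j.val + 1),
        (fun t => e t * seqZ sh (1 + (j.val : ℤ) - (i.val : ℤ) - t)) (j.val + 1 - 1 - k) =
      ∑ k ∈ Finset.range (j.val + 1),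
        (fun t => e t * seqZ sh (1 + (j.val : ℤ) - (i.val : ℤ) - t)) k :=
    Finset.sum_range_reflect
      (fun t : ℕ => e t * seqZ sh (1 + (j.val : ℤ) - (i.val : ℤ) - (t : ℤ))) (j.val + 1)
  have h4 : ∑ k ∈ Finset.range (j.val + 1), seqZ sh (1 + (k : ℤ) - (i.val : ℤ)) *
        seqZ e ((j.val : ℤ) - (k : ℤ)) =
      ∑ k ∈ Finset.range (j.val + 1), e k * seqZ sh (1 + (j.val : ℤ) - (i.val : ℤ) - k) := by
    rw [← h3]
    apply Finset.sum_congr rfl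
    intro k hk
    simp only [Finset.mem_range] at hk
    have hkj : k ≤ j.val := by omega
    have hc1 : ((j.val : ℤ) - (k : ℤ)) = ((j.val - k : ℕ) : ℤ) := by omega
    have hc2 : (1 + (j.val : ℤ) - (i.val : ℤ) - ((j.val + 1 - 1 - k : ℕ) : ℤ)) =
        1 + (k : ℤ) - (i.val : ℤ) := by omega
    simp only [hc2]
    rw [hc1, seqZ_coe]
    have : j.val + 1 - 1 - k = j.val - k := by omega
    rw [this, mul_comm]
  have h5 : sigZ e sh (1 + (j.val : ℤ) - (i.val : ℤ)) =
      (∑ t ∈ Finset.range (j.val + 1), e t * seqZ sh (1 + (j.val : ℤ) - (i.val : ℤ) - t)) +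
        e (j.val + 1) * seqZ sh (1 + (j.val : ℤ) - (i.val : ℤ) - ((j.val + 1 : ℕ) : ℤ)) := by
    rw [sigZ_eq_sum e sh _ (j.val + 2) (by omega), Finset.sum_range_succ]
  rw [h1, ← h2, h4, h5]
  have h6 : e (j.val + 1) * seqZ sh (1 + (j.val : ℤ) - (i.val : ℤ) - ((j.val + 1 : ℕ) : ℤ)) =
      if (i.val : ℕ) = 0 then e (j.val + 1) else 0 := by
    have : (1 + (j.val : ℤ) - (i.val : ℤ) - ((j.val + 1 : ℕ) : ℤ)) = -(i.val : ℤ) := by omega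
    rw [this]
    by_cases hi : i.val = 0
    · simp [hi, seqZ, hsh0]
    · rw [seqZ_neg sh (by omega), mul_zero, if_neg hi]
  rw [h6]
  ring

end Aux

/-- Inductive step of the recursion `σ̃_r = ∑_{i=0}^{r} e_i σ̂_{r-i}`: suppose
`ŝ_0 = s̃_0 = e_0 = 1`, `e_m = 0` for `m > n`, `ŝ_1 = s̃_1 - e_1`, and for each `m ≥ 2`
the determinants `det (ŝ_{1+j-i})_{1 ≤ i,j ≤ m}` and
`det (s̃_{1+j-i} - δ_{m j} e_{1+j-i})_{1 ≤ i,j ≤ m}` agree. If moreover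
`s̃_j = ∑_{i=0}^{j} e_i ŝ_{j-i}` for all `1 ≤ j ≤ r - 1`, then
`s̃_r = ∑_{i=0}^{r} e_i ŝ_{r-i}`. -/
theorem recursion_inductive_step {R : Type*} [CommRing R] (n : ℕ) (st sh e : ℕ → R)
    (hsh0 : sh 0 = 1) (hst0 : st 0 = 1) (he0 : e 0 = 1)
    (hen : ∀ m, n < m → e m = 0)
    (h1 : sh 1 = st 1 - e 1)
    (hdet : ∀ m, 2 ≤ m →
      Matrix.det (Matrix.of fun i j : Fin m =>
          seqZ sh (1 + (j.val : ℤ) - (i.val : ℤ))) =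
        Matrix.det (Matrix.of fun i j : Fin m =>
          seqZ st (1 + (j.val : ℤ) - (i.val : ℤ)) -
            if j.val = m - 1 then seqZ e (1 + (j.val : ℤ) - (i.val : ℤ)) else 0))
    (r : ℕ) (hr : 2 ≤ r)
    (hind : ∀ j, 1 ≤ j → j ≤ r - 1 →
      st j = ∑ i ∈ Finset.range (j + 1), e i * sh (j - i)) :
    st r = ∑ i ∈ Finset.range (r + 1), e i * sh (r - i) := by
  obtain ⟨q, rfl⟩ : ∃ q, r = q + 1 := ⟨r - 1, by omega⟩
  have hq : 1 ≤ q := by omega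
  -- the discrepancy
  set x : R := st (q + 1) - ∑ i ∈ Finset.range (q + 1 + 1), e i * sh (q + 1 - i) with hx
  -- the matrices
  set A : Matrix (Fin (q + 1)) (Fin (q + 1)) R :=
    Matrix.of (fun i j : Fin (q + 1) => seqZ sh (1 + (j.val : ℤ) - (i.val : ℤ))) with hA
  set B : Matrix (Fin (q + 1)) (Fin (q + 1)) R :=
    Matrix.of (fun i j : Fin (q + 1) =>
      seqZ st (1 + (j.val : ℤ) - (i.val : ℤ)) -
        if j.val = q + 1 - 1 then seqZ e (1 + (j.val : ℤ) - (i.val : ℤ)) else 0) with hB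
  set E : Matrix (Fin (q + 1)) (Fin (q + 1)) R :=
    Matrix.of (fun i j : Fin (q + 1) => seqZ e ((j.val : ℤ) - (i.val : ℤ))) with hE
  set T : Matrix (Fin (q + 1)) (Fin (q + 1)) R :=
    Matrix.of (fun i j : Fin (q + 1) => sigZ e sh (1 + (j.val : ℤ) - (i.val : ℤ))) with hT
  set U : Matrix (Fin (q + 1)) (Fin (q + 1)) R :=
    Matrix.of (fun i j : Fin (q + 1) => sigZ e sh ((j.val : ℤ) - (i.val : ℤ))) with hU
  set pE : Fin (q + 1) → R := fun j => e (j.val + 1) with hpE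
  set cE : Fin (q + 1) → R := fun i => seqZ e ((q : ℤ) + 1 - (i.val : ℤ)) with hcE
  set u0 : Fin (q + 1) → R := fun i => if i = 0 then 1 else 0 with hu0
  -- sigma agrees with st below q+1
  have hsig_st : ∀ z : ℤ, z ≤ (q : ℤ) → sigZ e sh z = seqZ st z := by
    intro z hz
    rcases lt_or_ge z 0 with h | h
    · rw [sigZ_neg e sh h, seqZ_neg st h]
    · obtain ⟨k, rfl⟩ : ∃ k : ℕ, z = (k : ℤ) := ⟨z.toNat, by omega⟩
      have hk : k ≤ q := by omega
      have hsum : sigZ e sh (k : ℤ) = ∑ t ∈ Finset.range (k + 1), e t * sh (k - t) := by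
        unfold sigZ
        rw [Int.toNat_natCast]
        apply Finset.sum_congr rfl
        intro t ht
        simp only [Finset.mem_range] at ht
        have : ((k : ℤ) - (t : ℤ)) = ((k - t : ℕ) : ℤ) := by omega
        rw [this, seqZ_coe]
      rw [hsum, seqZ_coe]
      rcases Nat.eq_zero_or_pos k with hk0 | hk1
      · subst hk0
        simp [hst0, he0, hsh0]
      · exact (hind k hk1 (by omega)).symm
  have hsig0 : sigZ e sh 0 = 1 := by
    rw [hsig_st 0 (by omega)]
    simp [seqZ, hst0]
  -- sigma at q+1
  have hsigr : sigZ e sh ((q : ℤ) + 1) = st (q + 1) - x := by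
    have h0 : ((q : ℤ) + 1) = ((q + 1 : ℕ) : ℤ) := by omega
    have hsum : sigZ e sh ((q + 1 : ℕ) : ℤ) =
        ∑ t ∈ Finset.range (q + 1 + 1), e t * sh (q + 1 - t) := by
      unfold sigZ
      rw [Int.toNat_natCast]
      apply Finset.sum_congr rfl
      intro t ht
      simp only [Finset.mem_range] at ht
      have : (((q + 1 : ℕ) : ℤ) - (t : ℤ)) = ((q + 1 - t : ℕ) : ℤ) := by omega
      rw [this, seqZ_coe]
    rw [h0, hsum, hx]
    ring
  -- A * E
  have hAE : A * E = T.updateRow 0 (fun j => T 0 j - pE j) := by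
    ext i j
    rw [Matrix.mul_apply]
    rw [Matrix.updateRow_apply]
    have hconv := conv_lemma e sh hsh0 i j
    by_cases hi : i = 0
    · subst hi
      rw [if_pos rfl]
      simp only [hA, hE, hT, hpE, Matrix.of_apply]
      rw [hconv]
      simp
    · rw [if_neg hi]
      have hi' : i.val ≠ 0 := fun h => hi (Fin.ext h)
      simp only [hA, hE, hT, Matrix.of_apply]
      rw [hconv, if_neg hi']
      ring
  have hdetE : E.det = 1 := by
    have htri : E.BlockTriangular id := by
      intro i j hij
      simp only [hE, Matrix.of_apply]
      have hv : (j : ℕ) < (i : ℕ) := hij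
      exact seqZ_neg e (by omega)
    rw [Matrix.det_of_upperTriangular htri]
    have : ∀ i : Fin (q + 1), E i i = 1 := by
      intro i
      simp only [hE, Matrix.of_apply, sub_self]
      simpa [seqZ] using he0
    simp [this]
  have hdetU : U.det = 1 := by
    have htri : U.BlockTriangular id := by
      intro i j hij
      simp only [hU, Matrix.of_apply]
      have hv : (j : ℕ) < (i : ℕ) := hij
      exact sigZ_neg e sh (by omega)
    rw [Matrix.det_of_upperTriangular htri]
    have : ∀ i : Fin (q + 1), U i i = 1 := by
      intro i
      simp only [hU, Matrix.of_apply, sub_self]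
      exact hsig0
    simp [this]
  -- det T = det A + R
  set Rdet : R := (T.updateRow 0 pE).det with hRdet
  have hdetT : T.det = A.det + Rdet := by
    have h1' : (T.updateRow 0 ((fun j => T 0 j - pE j) + pE)).det =
        (T.updateRow 0 (fun j => T 0 j - pE j)).det + (T.updateRow 0 pE).det :=
      Matrix.det_updateRow_add T 0 _ _
    have h2' : ((fun j => T 0 j - pE j) + pE) = T 0 := by
      funext j; simp
    rw [h2', Matrix.updateRow_eq_self] at h1'
    rw [h1', ← hAE, Matrix.det_mul, hdetE, mul_one, hRdet]
  -- B as a column update of T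
  have hBT : B = T.updateCol (Fin.last q)
      ((fun i => T i (Fin.last q)) + (-cE + x • u0)) := by
    ext i j
    rw [Matrix.updateCol_apply]
    by_cases hj : j = Fin.last q
    · subst hj
      rw [if_pos rfl]
      simp only [hB, hT, hcE, hu0, Matrix.of_apply, Pi.add_apply, Pi.neg_apply,
        Pi.smul_apply, smul_eq_mul, Fin.val_last]
      have hc : q = q + 1 - 1 := by omega
      rw [if_pos hc]
      have harg : (1 + (q : ℤ) - (i.val : ℤ)) = ((q : ℤ) + 1 - (i.val : ℤ)) := by ring
      rw [harg]
      by_cases hi : i = 0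
      · subst hi
        rw [if_pos rfl]
        simp only [Fin.val_zero, Nat.cast_zero, sub_zero]
        rw [hsigr]
        have h4 : ((q : ℤ) + 1) = ((q + 1 : ℕ) : ℤ) := by push_cast; ring
        rw [h4, seqZ_coe, seqZ_coe]
        ring
      · rw [if_neg hi]
        have hv : i.val ≠ 0 := fun h => hi (Fin.ext h)
        rw [hsig_st ((q : ℤ) + 1 - (i.val : ℤ)) (by omega)]
        ring
    · rw [if_neg hj]
      have hj' : j.val ≠ q + 1 - 1 := by
        intro h
        exact hj (Fin.ext (by simpa using h))
      simp only [hB, hT, Matrix.of_apply]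
      rw [if_neg hj']
      have hjq : (j.val : ℤ) ≤ (q : ℤ) - 1 := by
        have : j.val < q := by
          have := j.isLt
          rcases Nat.lt_or_ge j.val q with h | h
          · exact h
          · exfalso; exact hj' (by omega)
        omega
      rw [hsig_st (1 + (j.val : ℤ) - (i.val : ℤ)) (by omega)]
      ring
  -- split det B
  have hdetB : B.det = T.det - (T.updateCol (Fin.last q) cE).det +
      x * (T.updateCol (Fin.last q) u0).det := by
    rw [hBT]
    rw [Matrix.det_updateCol_add]
    rw [Matrix.det_updateCol_add]
    rw [Matrix.updateCol_eq_self]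
    have hneg : (-cE) = (-1 : R) • cE := by funext i; simp
    rw [hneg, Matrix.det_updateCol_smul, Matrix.det_updateCol_smul]
    ring
  -- flip: column update with cE equals row update with pE
  have hflip : (T.updateCol (Fin.last q) cE).det = Rdet := by
    have hsub : (T.updateCol (Fin.last q) cE).submatrix
        (Fin.revPerm : Equiv.Perm (Fin (q + 1))) Fin.revPerm = (T.updateRow 0 pE)ᵀ := by
      ext i j
      simp only [Matrix.submatrix_apply, Matrix.transpose_apply, Fin.revPerm_apply]
      rw [Matrix.updateCol_apply, Matrix.updateRow_apply]
      have hrevval : ∀ k : Fin (q + 1), (Fin.rev k).val = q - k.val := by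
        intro k; rw [Fin.val_rev]; omega
      by_cases hj : j = 0
      · subst hj
        have hrj : Fin.rev (0 : Fin (q + 1)) = Fin.last q := Fin.rev_zero q
        rw [if_pos hrj, if_pos rfl]
        simp only [hcE, hpE]
        have h6 : ((q : ℤ) + 1 - ((Fin.rev i).val : ℤ)) = ((i.val + 1 : ℕ) : ℤ) := by
          have := hrevval i
          have hi2 := i.isLt
          omega
        rw [h6, seqZ_coe]
      · have hrj : Fin.rev j ≠ Fin.last q := by
          rw [Ne, Fin.rev_eq_iff, Fin.rev_last]
          exact hj
        rw [if_neg hrj, if_neg hj]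
        simp only [hT, Matrix.of_apply]
        congr 1
        have h7 := hrevval i
        have h8 := hrevval j
        have h9 := i.isLt
        have h10 := j.isLt
        omega
    have hds := Matrix.det_submatrix_equiv_self (Fin.revPerm : Equiv.Perm (Fin (q + 1)))
      (T.updateCol (Fin.last q) cE)
    rw [hsub, Matrix.det_transpose] at hds
    exact hds.symm
  -- rotation: column update with u0
  have hrot : (T.updateCol (Fin.last q) u0).det = (-1 : R) ^ q := by
    have hsub : T.updateCol (Fin.last q) u0 = U.submatrix id (finRotate (q + 1)) := by
      ext i j
      simp only [Matrix.submatrix_apply, id]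
      rw [Matrix.updateCol_apply, finRotate_succ_apply]
      by_cases hj : j = Fin.last q
      · subst hj
        rw [if_pos rfl]
        have hlast2 : (Fin.last q + 1 : Fin (q + 1)) = 0 := Fin.last_add_one q
        rw [hlast2]
        simp only [hU, hu0, Matrix.of_apply, Fin.val_zero, Nat.cast_zero, zero_sub]
        by_cases hi : i = 0
        · subst hi
          simp [hsig0]
        · have hi' : i.val ≠ 0 := fun h => hi (Fin.ext h)
          rw [if_neg hi, sigZ_neg e sh (by omega)]

      · rw [if_neg hj]
        simp only [hT, hU, Matrix.of_apply]
        congr 1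
        have hv : (j + 1 : Fin (q + 1)).val = j.val + 1 := by
          rw [Fin.val_add_one]
          rw [if_neg hj]
        rw [hv]
        push_cast
        ring
    rw [hsub, Matrix.det_permute', hdetU, mul_one]
    rw [sign_finRotate]
    simp
  -- combine
  have hmain := hdet (q + 1) hr
  rw [← hA, ← hB] at hmain
  rw [hdetB, hdetT, hflip, hrot] at hmain
  have hxz : x * (-1 : R) ^ q = 0 := by linear_combination -hmain
  have hone : ((-1 : R) ^ q) * ((-1 : R) ^ q) = 1 := by
    rw [← mul_pow]; norm_num
  have hx0 : x = 0 := by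
    calc x = x * (((-1 : R) ^ q) * ((-1 : R) ^ q)) := by rw [hone, mul_one]
    _ = (x * (-1 : R) ^ q) * ((-1 : R) ^ q) := by ring
    _ = 0 := by rw [hxz, zero_mul]
  have hfin : st (q + 1) - ∑ i ∈ Finset.range (q + 1 + 1), e i * sh (q + 1 - i) = 0 :=
    hx ▸ hx0
  linear_combination hfin
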